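/- Define g(x) = h(x) − (1−p)·h((x−p)/(1−p)) for p ≤ x ≤ 1 and g(x) = 0 for x > 1, where h is the binary entropy function and p ∈ (0,1). Then the function y ↦ g(y^{1/n}) is non-increasing and convex on [p^n, ∞). -/

import Mathlib

/-- Binary entropy function (base 2). -/
noncomputable def binEnt (x : ℝ) : ℝ :=
  -(x * Real.logb 2 x) - (1 - x) * Real.logb 2 (1 - x)

/-- The function `g` of the paper: `g(x) = h(x) − (1−p)h((x−p)/(1−p))` for `p ≤ x ≤ 1`
and `g(x) = 0` for `x > 1`. -/
noncomputable def gFun (p x : ℝ) : ℝ :=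
  if x ≤ 1 then binEnt x - (1 - p) * binEnt ((x - p)/(1 - p)) else 0

open Real Set

/-- Auxiliary: the formula for `gFun` without the cutoff. -/
noncomputable def gaux (p x : ℝ) : ℝ :=
  binEnt x - (1 - p) * binEnt ((x - p)/(1 - p))


lemma binEnt_eq (x : ℝ) :
    binEnt x = (Real.negMulLog x + Real.negMulLog (1 - x)) / Real.log 2 := by
  simp only [binEnt, Real.logb, Real.negMulLog]
  ring

lemma binEnt_one : binEnt 1 = 0 := by simp [binEnt_eq]

lemma continuous_binEnt : Continuous binEnt := by
  have : binEnt = fun x => (Real.negMulLog x + Real.negMulLog (1 - x)) / Real.log 2 :=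
    funext binEnt_eq
  rw [this]
  fun_prop

lemma hasDerivAt_gaux {p x : ℝ} (hp : p ∈ Ioo (0:ℝ) 1) (hx : x ∈ Ioo p 1) :
    HasDerivAt (gaux p) ((Real.log (x - p) - Real.log x) / Real.log 2) x := by
  obtain ⟨hp0, hp1⟩ := hp
  obtain ⟨hpx, hx1⟩ := hx
  have hx0 : 0 < x := hp0.trans hpx
  have hxp : 0 < x - p := by linarith
  have h1x : 0 < 1 - x := by linarith
  have h1p : 0 < 1 - p := by linarith
  have hu : 0 < (x - p)/(1 - p) := by positivity
  have hu1 : (1:ℝ) - (x - p)/(1 - p) = (1 - x)/(1 - p) := by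
    field_simp
    ring
  have h1u : 0 < (1:ℝ) - (x - p)/(1 - p) := by rw [hu1]; positivity
  have hfun : gaux p = fun y => (Real.negMulLog y + Real.negMulLog (1 - y)
      - (1 - p) * (Real.negMulLog ((y - p)/(1 - p))
        + Real.negMulLog (1 - (y - p)/(1 - p)))) / Real.log 2 := by
    funext y
    simp only [gaux, binEnt_eq]
    ring
  rw [hfun]
  have h1 : HasDerivAt Real.negMulLog (-Real.log x - 1) x :=
    Real.hasDerivAt_negMulLog hx0.ne'
  have hinner2 : HasDerivAt (fun y : ℝ => 1 - y) (-1) x := (hasDerivAt_id x).const_sub 1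
  have h2 : HasDerivAt (fun y : ℝ => Real.negMulLog (1 - y))
      ((-Real.log (1 - x) - 1) * (-1)) x :=
    (Real.hasDerivAt_negMulLog h1x.ne').comp x hinner2
  have hinner3 : HasDerivAt (fun y : ℝ => (y - p)/(1 - p)) (1/(1 - p)) x := by
    simpa using ((hasDerivAt_id x).sub_const p).div_const (1 - p)
  have h3 : HasDerivAt (fun y : ℝ => Real.negMulLog ((y - p)/(1 - p)))
      ((-Real.log ((x - p)/(1 - p)) - 1) * (1/(1 - p))) x :=
    by have := (Real.hasDerivAt_negMulLog hu.ne').comp x hinner3; exact this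
  have hinner4 : HasDerivAt (fun y : ℝ => 1 - (y - p)/(1 - p)) (-(1/(1 - p))) x :=
    hinner3.const_sub 1
  have h4 : HasDerivAt (fun y : ℝ => Real.negMulLog (1 - (y - p)/(1 - p)))
      ((-Real.log (1 - (x - p)/(1 - p)) - 1) * (-(1/(1 - p)))) x :=
    by have := (Real.hasDerivAt_negMulLog h1u.ne').comp x hinner4; exact this
  have H := (((h1.add h2).sub ((h3.add h4).const_mul (1 - p))).div_const (Real.log 2))
  refine H.congr_deriv ?_
  have e1 : Real.log ((x - p)/(1 - p)) = Real.log (x - p) - Real.log (1 - p) :=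
    Real.log_div hxp.ne' h1p.ne'
  have e2 : Real.log (1 - (x - p)/(1 - p)) = Real.log (1 - x) - Real.log (1 - p) := by
    rw [hu1, Real.log_div h1x.ne' h1p.ne']
  rw [e1, e2]
  field_simp
  ring


lemma continuousOn_gaux (p : ℝ) : ContinuousOn (gaux p) (Icc p 1) := by
  have : Continuous (gaux p) := by
    unfold gaux
    exact continuous_binEnt.sub (continuous_const.mul (continuous_binEnt.comp
      ((continuous_id.sub continuous_const).div_const _)))
  exact this.continuousOn

lemma convexOn_gaux {p : ℝ} (hp : p ∈ Ioo (0:ℝ) 1) : ConvexOn ℝ (Icc p 1) (gaux p) := by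
  have hlog2 : 0 < Real.log 2 := Real.log_pos (by norm_num)
  refine MonotoneOn.convexOn_of_deriv (convex_Icc p 1) (continuousOn_gaux p) ?_ ?_
  · rw [interior_Icc]
    exact fun x hx => ((hasDerivAt_gaux hp hx).differentiableAt).differentiableWithinAt
  · rw [interior_Icc]
    intro a ha b hb hab
    rw [(hasDerivAt_gaux hp ha).deriv, (hasDerivAt_gaux hp hb).deriv]
    have ha0 : 0 < a := hp.1.trans ha.1
    have hap : 0 < a - p := by linarith [ha.1]
    have hbp : 0 < b - p := by linarith [hb.1]
    have hb0 : 0 < b := hp.1.trans hb.1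
    rw [div_le_div_iff_of_pos_right hlog2]
    rw [← Real.log_div hap.ne' ha0.ne', ← Real.log_div hbp.ne' hb0.ne']
    apply Real.log_le_log (by positivity)
    rw [div_le_div_iff₀ ha0 hb0]
    nlinarith [hp.1]

lemma antitoneOn_gaux {p : ℝ} (hp : p ∈ Ioo (0:ℝ) 1) : AntitoneOn (gaux p) (Icc p 1) := by
  have hlog2 : 0 < Real.log 2 := Real.log_pos (by norm_num)
  refine antitoneOn_of_deriv_nonpos (convex_Icc p 1) (continuousOn_gaux p) ?_ ?_
  · rw [interior_Icc]
    exact fun x hx => ((hasDerivAt_gaux hp hx).differentiableAt).differentiableWithinAt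
  · rw [interior_Icc]
    intro x hx
    rw [(hasDerivAt_gaux hp hx).deriv]
    have hxp : 0 < x - p := by linarith [hx.1]
    have hlog : Real.log (x - p) ≤ Real.log x := Real.log_le_log hxp (by linarith [hp.1])
    apply div_nonpos_of_nonpos_of_nonneg (by linarith) hlog2.le

lemma gaux_one {p : ℝ} (hp : p < 1) : gaux p 1 = 0 := by
  have : (1 - p) ≠ 0 := by linarith
  simp [gaux, div_self this, binEnt_one]

lemma gaux_nonneg {p : ℝ} (hp : p ∈ Ioo (0:ℝ) 1) {x : ℝ} (hx : x ∈ Icc p 1) :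
    0 ≤ gaux p x := by
  have := antitoneOn_gaux hp hx (right_mem_Icc.2 hp.2.le) hx.2
  rwa [gaux_one hp.2] at this


lemma glueConvex {q : ℝ} (hq : q < 1) {f : ℝ → ℝ}
    (hc : ConvexOn ℝ (Icc q 1) f)
    (h0 : ∀ x, 1 ≤ x → f x = 0)
    (hnn : ∀ x ∈ Icc q 1, 0 ≤ f x) :
    ConvexOn ℝ (Ici q) f := by
  have h1mem : (1:ℝ) ∈ Icc q 1 := right_mem_Icc.2 hq.le
  have key : ∀ x, q ≤ x → x ≤ 1 → ∀ y, 1 < y → ∀ a b : ℝ, 0 ≤ a → 0 ≤ b → a + b = 1 →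
      f (a * x + b * y) ≤ a * f x + b * f y := by
    intro x hqx hx1 y hy a b ha hb hab
    rw [h0 y hy.le, mul_zero, add_zero]
    have hfx : 0 ≤ f x := hnn x ⟨hqx, hx1⟩
    by_cases hz : 1 ≤ a * x + b * y
    · rw [h0 _ hz]; positivity
    push_neg at hz
    have hx1' : x < 1 := by nlinarith
    have hxz : x ≤ a * x + b * y := by nlinarith
    set z := a * x + b * y with hzdef
    set c := (1 - z)/(1 - x) with hcdef
    have h1x : 0 < 1 - x := by linarith
    have hc0 : 0 ≤ c := by
      apply div_nonneg (by linarith) h1x.le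
    have hc1 : c ≤ 1 := by
      rw [div_le_one h1x]; linarith
    have hcx : c * (1 - x) = 1 - z := div_mul_cancel₀ _ h1x.ne'
    have hzc : c * x + (1 - c) * 1 = z := by linear_combination -hcx
    have h2 : f (c • x + (1 - c) • (1:ℝ)) ≤ c • f x + (1 - c) • f 1 :=
      hc.2 (⟨hqx, hx1'.le⟩ : x ∈ Icc q 1) h1mem hc0 (by linarith) (by ring)
    simp only [smul_eq_mul, h0 1 le_rfl, mul_zero, add_zero, hzc] at h2
    have hca : c ≤ a := by
      rw [hcdef, div_le_iff₀ h1x]; nlinarith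
    calc f z ≤ c * f x := h2
      _ ≤ a * f x := by nlinarith
  refine ⟨convex_Ici q, ?_⟩
  intro x hx y hy a b ha hb hab
  simp only [smul_eq_mul]
  rcases le_or_gt x 1 with hx1 | hx1
  · rcases le_or_gt y 1 with hy1 | hy1
    · simpa using hc.2 (⟨hx, hx1⟩ : x ∈ Icc q 1) ⟨hy, hy1⟩ ha hb hab
    · exact key x hx hx1 y hy1 a b ha hb hab
  · rcases le_or_gt y 1 with hy1 | hy1
    · have h := key y hy hy1 x hx1 b a hb ha (by linarith)
      calc f (a * x + b * y) = f (b * y + a * x) := by rw [add_comm]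
        _ ≤ b * f y + a * f x := h
        _ = a * f x + b * f y := by ring
    · have hz : 1 ≤ a * x + b * y := by nlinarith
      rw [h0 _ hz, h0 x hx1.le, h0 y hy1.le]; simp

lemma glueAntitone {q : ℝ} (hq : q < 1) {f : ℝ → ℝ}
    (ha : AntitoneOn f (Icc q 1))
    (h0 : ∀ x, 1 ≤ x → f x = 0)
    (hnn : ∀ x ∈ Icc q 1, 0 ≤ f x) :
    AntitoneOn f (Ici q) := by
  intro x hx y hy hxy
  rcases le_or_gt y 1 with hy1 | hy1
  · exact ha ⟨hx, hxy.trans hy1⟩ ⟨hy, hy1⟩ hxy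
  · rw [h0 y hy1.le]
    rcases le_or_gt x 1 with hx1 | hx1
    · exact hnn x ⟨hx, hx1⟩
    · rw [h0 x hx1.le]

lemma gFun_eq_gaux {p x : ℝ} (hx : x ≤ 1) : gFun p x = gaux p x := if_pos hx

lemma gFun_of_one_le {p x : ℝ} (hp : p < 1) (hx : 1 ≤ x) : gFun p x = 0 := by
  rcases eq_or_lt_of_le hx with h | h
  · rw [← h, gFun_eq_gaux le_rfl, gaux_one hp]
  · exact if_neg (not_le.2 h)

/-- Corollary 1: `y ↦ g(y^{1/n})` is non-increasing and convex on `[pⁿ, ∞)`. -/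
theorem stmt_13 (p : ℝ) (hp : p ∈ Set.Ioo (0 : ℝ) 1) (n : ℕ) (hn : 1 ≤ n) :
    AntitoneOn (fun y : ℝ => gFun p (y ^ (1/(n : ℝ)))) (Set.Ici (p ^ n)) ∧
    ConvexOn ℝ (Set.Ici (p ^ n)) (fun y : ℝ => gFun p (y ^ (1/(n : ℝ)))) := by
  obtain ⟨hp0, hp1⟩ := hp
  set r : ℝ := 1 / (n : ℝ) with hrdef
  set q : ℝ := p ^ n with hqdef
  set F : ℝ → ℝ := fun y : ℝ => gFun p (y ^ r) with hFdef
  have hn0 : (0:ℝ) < (n:ℝ) := by exact_mod_cast Nat.pos_of_ne_zero (by omega)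
  have hr0 : 0 < r := by positivity
  have hr1 : r ≤ 1 := by
    rw [hrdef, div_le_one hn0]
    exact_mod_cast hn
  have hq0 : 0 < q := pow_pos hp0 n
  have hq1 : q < 1 := pow_lt_one₀ hp0.le hp1 (by omega)
  have hqr : q ^ r = p := by
    rw [hqdef, ← Real.rpow_natCast p n, ← Real.rpow_mul hp0.le, mul_one_div,
      div_self hn0.ne', Real.rpow_one]
  -- rpow facts
  have hrmono : ∀ {y₁ y₂ : ℝ}, 0 ≤ y₁ → y₁ ≤ y₂ → y₁ ^ r ≤ y₂ ^ r :=
    fun h1 h12 => Real.rpow_le_rpow h1 h12 hr0.le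
  have hmaps : ∀ {y : ℝ}, y ∈ Icc q 1 → y ^ r ∈ Icc p 1 := by
    intro y hy
    constructor
    · rw [← hqr]; exact hrmono hq0.le hy.1
    · calc y ^ r ≤ 1 ^ r := hrmono (hq0.le.trans hy.1) hy.2
        _ = 1 := Real.one_rpow r
  have hFeq : ∀ {y : ℝ}, y ∈ Icc q 1 → F y = gaux p (y ^ r) :=
    fun hy => gFun_eq_gaux (hmaps hy).2
  have hF0 : ∀ y, 1 ≤ y → F y = 0 := by
    intro y hy
    have : (1:ℝ) ≤ y ^ r := by
      calc (1:ℝ) = 1 ^ r := (Real.one_rpow r).symm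
        _ ≤ y ^ r := hrmono zero_le_one hy
    exact gFun_of_one_le hp1 this
  have hFnn : ∀ y ∈ Icc q 1, 0 ≤ F y := by
    intro y hy
    rw [hFeq hy]
    exact gaux_nonneg ⟨hp0, hp1⟩ (hmaps hy)
  have hFanti : AntitoneOn F (Icc q 1) := by
    intro y₁ h₁ y₂ h₂ h12
    rw [hFeq h₁, hFeq h₂]
    exact antitoneOn_gaux ⟨hp0, hp1⟩ (hmaps h₁) (hmaps h₂) (hrmono (hq0.le.trans h₁.1) h12)
  have hconc : ConcaveOn ℝ (Icc q 1) (fun y : ℝ => y ^ r) :=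
    (Real.concaveOn_rpow hr0.le hr1).subset
      (fun y hy => le_trans hq0.le hy.1) (convex_Icc _ _)
  have hFconv : ConvexOn ℝ (Icc q 1) F := by
    refine ⟨convex_Icc _ _, ?_⟩
    intro y₁ h₁ y₂ h₂ a b ha hb hab
    have hz : a • y₁ + b • y₂ ∈ Icc q 1 := (convex_Icc q 1) h₁ h₂ ha hb hab
    have hw : a • (y₁ ^ r) + b • (y₂ ^ r) ∈ Icc p 1 :=
      (convex_Icc p 1) (hmaps h₁) (hmaps h₂) ha hb hab
    have hcc : a • (y₁ ^ r) + b • (y₂ ^ r) ≤ (a • y₁ + b • y₂) ^ r :=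
      hconc.2 h₁ h₂ ha hb hab
    rw [hFeq hz, hFeq h₁, hFeq h₂]
    calc gaux p ((a • y₁ + b • y₂) ^ r)
        ≤ gaux p (a • (y₁ ^ r) + b • (y₂ ^ r)) :=
          antitoneOn_gaux ⟨hp0, hp1⟩ hw (hmaps hz) hcc
      _ ≤ a • gaux p (y₁ ^ r) + b • gaux p (y₂ ^ r) :=
          (convexOn_gaux ⟨hp0, hp1⟩).2 (hmaps h₁) (hmaps h₂) ha hb hab
  exact ⟨glueAntitone hq1 hFanti hF0 hFnn, glueConvex hq1 hFconv hF0 hFnn⟩
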